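/- In the twisted adjoint action example (rank one), for any λ ∈ ℂ the map φ given on generators by φ(e) = (1 − q^{2λ}) e, φ(f) = 0, φ(t) = q^{λ}·1 satisfies the compatibility condition φ(xy) = (ξ_{x₍₁₎}·φ(y))·φ(x₍₂₎) on the defining relations of Uq(sl2), and hence yields a modified left Uq(sl2)-module structure on ℂ[e] via x·g := (ξ_{x₍₁₎}·g)·φ(x₍₂₎). -/

import Mathlib

open Polynomial

set_option maxHeartbeats 1000000 in
lemma key_identity (q u B : ℂ) (hq0 : q ≠ 0) (hu : u ≠ 0) (hB : B ≠ 0)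
    (hqq : q - q⁻¹ ≠ 0) (h2ne : 1 - (q ^ 2)⁻¹ ≠ 0) (h21 : q ^ 2 - 1 ≠ 0) :
    u⁻¹ * ((q - q⁻¹)⁻¹ * ((1 - (B * q ^ 2)⁻¹) / (1 - (q ^ 2)⁻¹)) * (1 - B)) +
        (1 - u * u) * (u⁻¹ * ((q - q⁻¹)⁻¹ * ((1 - (B * q ^ 2)⁻¹) / (1 - (q ^ 2)⁻¹)) * B)) -
      u⁻¹ *
        ((1 - B * q ^ 2) * ((q - q⁻¹)⁻¹ * ((1 - (B * q ^ 2 * q ^ 2)⁻¹) / (1 - (q ^ 2)⁻¹))) +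
          (1 - u * u) * (B * q ^ 2 * ((q - q⁻¹)⁻¹ * ((1 - (B * q ^ 2 * q ^ 2)⁻¹) / (1 - (q ^ 2)⁻¹))))) =
    (q - q⁻¹)⁻¹ * (u * (B * q ^ 2) - u⁻¹ * (B * q ^ 2)⁻¹) := by
  have e1 : q - q⁻¹ = (q^2-1)/q := by field_simp
  have e2 : 1 - (q^2)⁻¹ = (q^2-1)/q^2 := by field_simp
  have e3 : 1 - (B*q^2)⁻¹ = (B*q^2-1)/(B*q^2) := by field_simp
  have e4 : 1 - (B*q^2*q^2)⁻¹ = (B*q^2*q^2-1)/(B*q^2*q^2) := by field_simp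
  rw [e1, e2, e3, e4]
  have hQ1 : q ^ 2 * B * u - q ^ 4 * B * u * 2 + q ^ 6 * B * u ≠ 0 := by
    rw [show q ^ 2 * B * u - q ^ 4 * B * u * 2 + q ^ 6 * B * u
        = q ^ 2 * B * u * ((q ^ 2 - 1) * (q ^ 2 - 1)) by ring]
    exact mul_ne_zero (mul_ne_zero (mul_ne_zero (pow_ne_zero _ hq0) hB) hu)
      (mul_ne_zero h21 h21)
  field_simp [hq0, hu, hB, h21]
  have hD1 : u * ((q ^ 2 - 1) * (B * q ^ 2 * (q ^ 2 - 1))) ≠ 0 :=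
    mul_ne_zero hu (mul_ne_zero h21 (mul_ne_zero (mul_ne_zero hB (pow_ne_zero _ hq0)) h21))
  have hD2 : u * ((q ^ 2 - 1) * (B * q ^ 2 * q ^ 2 * (q ^ 2 - 1))) ≠ 0 :=
    mul_ne_zero hu (mul_ne_zero h21 (mul_ne_zero (mul_ne_zero (mul_ne_zero hB
      (pow_ne_zero _ hq0)) (pow_ne_zero _ hq0)) h21))
  ring


/-- The symmetric `q`-number `[x] = (qˣ - q⁻ˣ)/(q - q⁻¹)` (complex powers). -/
noncomputable def qnum (q : ℝ) (x : ℂ) : ℂ :=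
  ((q : ℂ) ^ x - (q : ℂ) ^ (-x)) / ((q : ℂ) - (q : ℂ)⁻¹)

/-- Twisted adjoint action, rank one, modified by the weight `λ`: the prescription
`x·g := (ξ_{x₍₁₎}·g)·φ(x₍₂₎)` with `φ(e) = (1-q^{2λ})e`, `φ(f) = 0`, `φ(t) = q^λ·1`
yields operators `t·g = q^λ ξ_t(g)`, `e·g = ξ_e(g) + (1-q^{2λ}) ξ_t(g)·e`,
`f·g = q^{-λ} ξ_f(g)` which again satisfy the defining relations of `U_q(sl₂)`,
i.e. define a modified left `U_q(sl₂)`-module structure on `ℂ[e]`. -/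
theorem twisted_adjoint_modified_action (q : ℝ) (hq : 0 < q) (hq1 : q ≠ 1) (lam : ℂ)
    (Te Tinv Ee Fe : Module.End ℂ (Polynomial ℂ))
    (hTe : ∀ n : ℕ, Te (X ^ n) = ((q : ℂ) ^ (2 * n)) • X ^ n)
    (hTinv : ∀ n : ℕ, Tinv (X ^ n) = (((q : ℂ) ^ (2 * n))⁻¹) • X ^ n)
    (hEe : ∀ n : ℕ, Ee (X ^ n) = (1 - (q : ℂ) ^ (2 * n)) • X ^ (n + 1))
    (hFe0 : Fe 1 = 0)
    (hFe : ∀ n : ℕ, Fe (X ^ (n + 1)) =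
      (((q : ℂ) - (q : ℂ)⁻¹)⁻¹ *
        ((1 - ((q : ℂ) ^ (2 * (n + 1)))⁻¹) / (1 - ((q : ℂ) ^ 2)⁻¹))) • X ^ n) :
    -- the modified operators
    (((q : ℂ) ^ lam • Te) ∘ₗ (((q : ℂ) ^ lam)⁻¹ • Tinv) = LinearMap.id) ∧
    ((((q : ℂ) ^ lam)⁻¹ • Tinv) ∘ₗ ((q : ℂ) ^ lam • Te) = LinearMap.id) ∧
    (((q : ℂ) ^ lam • Te) ∘ₗ
        (Ee + (1 - (q : ℂ) ^ (2 * lam)) • (LinearMap.mulRight ℂ (X : Polynomial ℂ) ∘ₗ Te)) =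
      ((q : ℂ) ^ 2) •
        ((Ee + (1 - (q : ℂ) ^ (2 * lam)) • (LinearMap.mulRight ℂ (X : Polynomial ℂ) ∘ₗ Te)) ∘ₗ
          ((q : ℂ) ^ lam • Te))) ∧
    (((q : ℂ) ^ lam • Te) ∘ₗ (((q : ℂ) ^ lam)⁻¹ • Fe) =
      (((q : ℂ) ^ 2)⁻¹) • ((((q : ℂ) ^ lam)⁻¹ • Fe) ∘ₗ ((q : ℂ) ^ lam • Te))) ∧
    ((Ee + (1 - (q : ℂ) ^ (2 * lam)) • (LinearMap.mulRight ℂ (X : Polynomial ℂ) ∘ₗ Te)) ∘ₗ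
        (((q : ℂ) ^ lam)⁻¹ • Fe) -
      (((q : ℂ) ^ lam)⁻¹ • Fe) ∘ₗ
        (Ee + (1 - (q : ℂ) ^ (2 * lam)) • (LinearMap.mulRight ℂ (X : Polynomial ℂ) ∘ₗ Te)) =
      ((q : ℂ) - (q : ℂ)⁻¹)⁻¹ •
        (((q : ℂ) ^ lam • Te) - (((q : ℂ) ^ lam)⁻¹ • Tinv))) := by
  -- basic nonvanishing facts
  have hq0 : (q : ℂ) ≠ 0 := by
    exact_mod_cast Complex.ofReal_ne_zero.mpr hq.ne'
  have hq2 : (q : ℂ) ^ 2 ≠ 1 := by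
    intro h
    have h2 : (q : ℝ) ^ 2 = 1 := by exact_mod_cast h
    have : q = 1 := by nlinarith
    exact hq1 this
  have hqn : ∀ n : ℕ, (q : ℂ) ^ n ≠ 0 := fun n => pow_ne_zero n hq0
  have hu : (q : ℂ) ^ lam ≠ 0 := by
    rw [Complex.cpow_def_of_ne_zero hq0]; exact Complex.exp_ne_zero _
  have h2lam : (q : ℂ) ^ (2 * lam) = (q : ℂ) ^ lam * (q : ℂ) ^ lam := by
    rw [two_mul, Complex.cpow_add _ _ hq0]
  have hqq : (q : ℂ) - (q : ℂ)⁻¹ ≠ 0 := by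
    intro h
    apply hq2
    field_simp at h
    rw [mul_zero, sub_eq_zero] at h
    exact h
  have h2ne : 1 - ((q:ℂ)^2)⁻¹ ≠ 0 := by
    rw [sub_ne_zero]
    intro h
    exact hq2 (by rw [← inv_inv ((q:ℂ)^2), ← h, inv_one])
  set u : ℂ := (q : ℂ) ^ lam with hu_def
  clear_value u
  refine ⟨?_, ?_, ?_, ?_, ?_⟩
  · apply Polynomial.lhom_ext'
    intro n
    apply LinearMap.ext_ring
    simp only [LinearMap.comp_apply, LinearMap.smul_apply, LinearMap.id_apply,
      ← Polynomial.X_pow_eq_monomial, hTinv, map_smul, hTe, smul_smul]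
    rw [show u⁻¹ * ((q:ℂ) ^ (2*n))⁻¹ * (u * (q:ℂ) ^ (2*n)) = 1 by
      field_simp, one_smul]
  · apply Polynomial.lhom_ext'
    intro n
    apply LinearMap.ext_ring
    simp only [LinearMap.comp_apply, LinearMap.smul_apply, LinearMap.id_apply,
      ← Polynomial.X_pow_eq_monomial, hTe, map_smul, hTinv, smul_smul]
    rw [show u * (q:ℂ) ^ (2*n) * (u⁻¹ * ((q:ℂ) ^ (2*n))⁻¹) = 1 by
      field_simp, one_smul]
  · apply Polynomial.lhom_ext'
    intro n
    apply LinearMap.ext_ring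
    simp only [LinearMap.comp_apply, LinearMap.smul_apply, LinearMap.add_apply,
      LinearMap.mulRight_apply, ← Polynomial.X_pow_eq_monomial, hTe, hEe, map_smul,
      map_add, smul_mul_assoc, smul_smul, ← pow_succ]
    simp only [smul_add, smul_smul, ← add_smul]
    congr 1
    rw [show (q:ℂ) ^ (2*(n+1)) = (q:ℂ)^(2*n) * (q:ℂ)^2 by rw [← pow_add]; ring_nf]
    ring
  · apply Polynomial.lhom_ext'
    intro n
    apply LinearMap.ext_ring
    simp only [LinearMap.comp_apply, LinearMap.smul_apply, ← Polynomial.X_pow_eq_monomial,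
      map_smul, hTe, smul_smul]
    cases n with
    | zero =>
      simp [hFe0]
    | succ m =>
      simp only [hFe, hTe, map_smul, smul_smul]
      congr 1
      rw [show (q:ℂ) ^ (2*(m+1)) = (q:ℂ)^(2*m) * (q:ℂ)^2 by rw [← pow_add]; ring_nf]
      field_simp
  · apply Polynomial.lhom_ext'
    intro n
    apply LinearMap.ext_ring
    have hE1 : Ee 1 = 0 := by simpa using hEe 0
    have hT1 : Te 1 = 1 := by simpa using hTe 0
    have hTinv1 : Tinv 1 = 1 := by simpa using hTinv 0
    have hF1 : Fe X = ((q:ℂ) - (q:ℂ)⁻¹)⁻¹ • (1 : Polynomial ℂ) := by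
      have h := hFe 0
      norm_num at h
      rw [h]
      congr 1
      rw [div_self h2ne, mul_one]
    cases n with
    | zero =>
      simp only [LinearMap.sub_apply, LinearMap.comp_apply, LinearMap.smul_apply,
        LinearMap.add_apply, LinearMap.mulRight_apply, ← Polynomial.X_pow_eq_monomial,
        pow_zero]
      simp only [hFe0, smul_zero, map_zero, zero_mul, zero_add, hE1, hT1, hTinv1,
        one_mul, map_smul, hF1, h2lam, smul_smul]
      rw [zero_sub, ← neg_smul, smul_sub, smul_smul, smul_smul, ← sub_smul]
      congr 1
      have huc : u * u⁻¹ = 1 := mul_inv_cancel₀ hu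
      linear_combination (((q:ℂ) - (q:ℂ)⁻¹)⁻¹ * u) * huc
    | succ m =>
      simp only [LinearMap.sub_apply, LinearMap.comp_apply, LinearMap.smul_apply,
        LinearMap.add_apply, LinearMap.mulRight_apply, ← Polynomial.X_pow_eq_monomial]
      rw [hFe m, hEe (m+1), hTe (m+1), hTinv (m+1)]
      simp only [map_smul, map_add]
      rw [hEe m, hTe m]
      simp only [smul_mul_assoc, ← pow_succ]
      simp only [map_smul]
      rw [hFe (m+1), h2lam]
      simp only [smul_smul, smul_sub, smul_add, ← add_smul, ← sub_smul]
      congr 1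
      rw [show (q:ℂ) ^ (2*(m+1)) = (q:ℂ)^(2*m) * (q:ℂ)^2 by rw [← pow_add]; ring_nf,
        show (q:ℂ) ^ (2*(m+1+1)) = (q:ℂ)^(2*m) * (q:ℂ)^2 * (q:ℂ)^2 by
          rw [← pow_add, ← pow_add]; ring_nf]
      have hB : (q:ℂ)^(2*m) ≠ 0 := hqn _
      generalize (q:ℂ)^(2*m) = B at hB ⊢
      exact key_identity (q:ℂ) u B hq0 hu hB hqq h2ne (sub_ne_zero.mpr hq2)
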